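/- The subTuring jump K is uniformly monotone: there is a computable function b such that if f ≤subT g via index d (i.e. f ⊆ Φ_d[g]), then K(f) ≤subT K(g) via the index λe. b(d,e); concretely K(f)(e) = K(g)(b(d,e)) for all e ∈ dom(K(f)). -/

import Mathlib

open Classical

noncomputable section

/-- `as` is a valid answer history for the sequential oracle computation of `Φ`
with oracle `g` on input `n`: at each round `k`, the machine outputs a query
`(false, q)` with `q` in the domain of `g`, answered by `g q = as[k]`. -/
def ValidHist (Φ : List ℕ →. Bool × ℕ) (g : ℕ →. ℕ) (n : ℕ) (as : List ℕ) : Prop :=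
  ∀ (k : ℕ) (hk : k < as.length), ∃ q : ℕ,
    (false, q) ∈ Φ (n :: as.take k) ∧ (as[k]'hk) ∈ g q

/-- The sequential oracle computation `Φ[g](n)` halts with output `m`. -/
def HaltsTo (Φ : List ℕ →. Bool × ℕ) (g : ℕ →. ℕ) (n m : ℕ) : Prop :=
  ∃ as : List ℕ, ValidHist Φ g n as ∧ (true, m) ∈ Φ (n :: as)

/-- subTuring reducibility: `f ⊆ Φ[g]` for some partial computable `Φ`. -/
def SubTuringLE (f g : ℕ →. ℕ) : Prop :=
  ∃ Φ : List ℕ →. Bool × ℕ, Partrec Φ ∧ ∀ n m, m ∈ f n → HaltsTo Φ g n m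

/-- subTuring equivalence. -/
def SubTuringEquiv (f g : ℕ →. ℕ) : Prop := SubTuringLE f g ∧ SubTuringLE g f

/-- The `e`-th partial computable function `List ℕ →. Bool × ℕ`,
obtained from the `e`-th partial recursive code. -/
def phi (e : ℕ) : List ℕ →. Bool × ℕ := fun l =>
  ((Denumerable.ofNat Nat.Partrec.Code e).eval (Encodable.encode l)).bind fun k =>
    Part.ofOption (Encodable.decode (α := Bool × ℕ) k)

/-- The computation `Φ[g](n)` gets stuck: it makes a query outside `dom g`. -/
def Stuck (Φ : List ℕ →. Bool × ℕ) (g : ℕ →. ℕ) (n : ℕ) : Prop :=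
  ∃ as q, ValidHist Φ g n as ∧ (false, q) ∈ Φ (n :: as) ∧ q ∉ g.Dom

/-- The subTuring jump: `K f e = 1` if `Φ_e[f](e)` halts, `0` if it diverges
making only queries inside `dom f`, and undefined if it makes a query outside `dom f`. -/
def KJump (f : ℕ →. ℕ) : ℕ →. ℕ := fun e =>
  ⟨¬ Stuck (phi e) f e, fun _ => if (∃ m, HaltsTo (phi e) f e m) then 1 else 0⟩

namespace KJAux
open Nat.Partrec (Code)
open Nat.Partrec.Code Encodable Denumerable

abbrev Cfg : Type := List ℕ × List ℕ × Option (ℕ × List ℕ)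

def postOuter : Cfg → Bool × ℕ → (Bool × ℕ) ⊕ Cfg := fun c r =>
  cond r.1 (Sum.inl r) (Sum.inr (c.1, c.2.1, some (r.2, [])))

def postInner : Cfg × (ℕ × List ℕ) → Bool × ℕ → (Bool × ℕ) ⊕ Cfg := fun x r =>
  cond r.1 (Sum.inr (x.1.1 ++ [r.2], x.1.2.1, none))
    (Option.casesOn x.1.2.1.head? (Sum.inl (false, r.2))
      (fun a => Sum.inr (x.1.1, x.1.2.1.tail, some (x.2.1, x.2.2 ++ [a]))))

def post : Cfg → Bool × ℕ → (Bool × ℕ) ⊕ Cfg := fun c r =>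
  Option.casesOn c.2.2 (postOuter c r) (fun qc => postInner (c, qc) r)

theorem postOuter_primrec : Primrec₂ postOuter := by
  have hbs : Primrec fun x : Cfg × (Bool × ℕ) => x.1.1 := Primrec.fst.comp .fst
  have hrem : Primrec fun x : Cfg × (Bool × ℕ) => x.1.2.1 :=
    Primrec.fst.comp (Primrec.snd.comp .fst)
  have hrb : Primrec fun x : Cfg × (Bool × ℕ) => x.2.1 := Primrec.fst.comp .snd
  have hrn : Primrec fun x : Cfg × (Bool × ℕ) => x.2.2 := Primrec.snd.comp .snd
  exact (Primrec.cond hrb (Primrec.sumInl.comp .snd)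
    (Primrec.sumInr.comp (hbs.pair (hrem.pair
      (Primrec.option_some.comp (hrn.pair (Primrec.const ([] : List ℕ)))))))).to₂

theorem postInner_primrec : Primrec₂ postInner := by
  have hbs : Primrec fun x : (Cfg × (ℕ × List ℕ)) × (Bool × ℕ) => x.1.1.1 :=
    Primrec.fst.comp (Primrec.fst.comp .fst)
  have hrem : Primrec fun x : (Cfg × (ℕ × List ℕ)) × (Bool × ℕ) => x.1.1.2.1 :=
    Primrec.fst.comp (Primrec.snd.comp (Primrec.fst.comp .fst))
  have hq : Primrec fun x : (Cfg × (ℕ × List ℕ)) × (Bool × ℕ) => x.1.2.1 :=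
    Primrec.fst.comp (Primrec.snd.comp .fst)
  have hcs : Primrec fun x : (Cfg × (ℕ × List ℕ)) × (Bool × ℕ) => x.1.2.2 :=
    Primrec.snd.comp (Primrec.snd.comp .fst)
  have hrb : Primrec fun x : (Cfg × (ℕ × List ℕ)) × (Bool × ℕ) => x.2.1 :=
    Primrec.fst.comp .snd
  have hrn : Primrec fun x : (Cfg × (ℕ × List ℕ)) × (Bool × ℕ) => x.2.2 :=
    Primrec.snd.comp .snd
  have htrue : Primrec fun x : (Cfg × (ℕ × List ℕ)) × (Bool × ℕ) =>
      (Sum.inr (x.1.1.1 ++ [x.2.2], x.1.1.2.1, (none : Option (ℕ × List ℕ)))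
        : (Bool × ℕ) ⊕ Cfg) :=
    Primrec.sumInr.comp ((Primrec.list_concat.comp hbs hrn).pair
      (hrem.pair (Primrec.const none)))
  have hfcons : Primrec₂ fun (x : (Cfg × (ℕ × List ℕ)) × (Bool × ℕ)) (a : ℕ) =>
      (Sum.inr (x.1.1.1, x.1.1.2.1.tail, some (x.1.2.1, x.1.2.2 ++ [a]))
        : (Bool × ℕ) ⊕ Cfg) :=
    (Primrec.sumInr.comp ((hbs.comp .fst).pair
      (((Primrec.list_tail.comp hrem).comp .fst).pair
        (Primrec.option_some.comp (((hq.comp .fst)).pair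
          (Primrec.list_concat.comp (hcs.comp .fst) .snd)))))).to₂
  have hfalse : Primrec fun x : (Cfg × (ℕ × List ℕ)) × (Bool × ℕ) =>
      (Option.casesOn x.1.1.2.1.head? (Sum.inl (false, x.2.2))
        (fun a => Sum.inr (x.1.1.1, x.1.1.2.1.tail, some (x.1.2.1, x.1.2.2 ++ [a])))
        : (Bool × ℕ) ⊕ Cfg) :=
    Primrec.option_casesOn (Primrec.list_head?.comp hrem)
      (Primrec.sumInl.comp ((Primrec.const false).pair hrn)) hfcons
  exact (Primrec.cond hrb htrue hfalse).to₂

theorem post_primrec : Primrec₂ post := by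
  have hinn : Primrec fun x : Cfg × (Bool × ℕ) => x.1.2.2 :=
    Primrec.snd.comp (Primrec.snd.comp .fst)
  have := Primrec.option_casesOn (o := fun x : Cfg × (Bool × ℕ) => x.1.2.2)
    (f := fun x => postOuter x.1 x.2)
    (g := fun x qc => postInner (x.1, qc) x.2)
    hinn (postOuter_primrec.comp .fst .snd)
    ((postInner_primrec.comp ((Primrec.fst.comp .fst).pair .snd)
      (Primrec.snd.comp .fst)).to₂)
  exact this.to₂.of_eq fun c r => by rcases c with ⟨bs, rem, inn⟩; cases inn <;> rfl

def qcode : ℕ × ℕ → Cfg → ℕ := fun p c => Option.casesOn c.2.2 p.2 (fun _ => p.1)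
def qinput : ℕ × ℕ → Cfg → List ℕ := fun p c =>
  Option.casesOn c.2.2 (p.2 :: c.1) (fun qc => qc.1 :: qc.2)

theorem qcode_primrec : Primrec₂ qcode := by
  have := Primrec.option_casesOn
    (o := fun x : (ℕ × ℕ) × Cfg => x.2.2.2)
    (f := fun x => x.1.2) (g := fun x _ => x.1.1)
    (Primrec.snd.comp (Primrec.snd.comp .snd)) (Primrec.snd.comp .fst)
    ((Primrec.fst.comp (Primrec.fst.comp .fst)).to₂)
  exact this.to₂.of_eq fun p c => by rcases c with ⟨bs, rem, inn⟩; cases inn <;> rfl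

theorem qinput_primrec : Primrec₂ qinput := by
  have := Primrec.option_casesOn
    (o := fun x : (ℕ × ℕ) × Cfg => x.2.2.2)
    (f := fun x => x.1.2 :: x.2.1) (g := fun x qc => qc.1 :: qc.2)
    (Primrec.snd.comp (Primrec.snd.comp .snd))
    (Primrec.list_cons.comp (Primrec.snd.comp .fst) (Primrec.fst.comp .snd))
    ((Primrec.list_cons.comp (Primrec.fst.comp .snd) (Primrec.snd.comp .snd)).to₂)
  exact this.to₂.of_eq fun p c => by rcases c with ⟨bs, rem, inn⟩; cases inn <;> rfl

theorem phi_partrec : Partrec₂ phi := by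
  have h1 : Partrec fun p : ℕ × List ℕ =>
      (Denumerable.ofNat Code p.1).eval (Encodable.encode p.2) :=
    eval_part.comp ((Computable.ofNat Code).comp Computable.fst)
      (Computable.encode.comp Computable.snd)
  have h2 : Partrec₂ fun (_ : ℕ × List ℕ) (k : ℕ) =>
      Part.ofOption (Encodable.decode (α := Bool × ℕ) k) :=
    (Computable.ofOption (Computable.decode.comp Computable.snd)).of_eq fun p => rfl
  exact (h1.bind h2).of_eq fun p => rfl

def simF (p : ℕ × ℕ) (c : Cfg) : Part ((Bool × ℕ) ⊕ Cfg) :=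
  (phi (qcode p c) (qinput p c)).map (post c)

theorem simF_partrec : Partrec₂ simF := by
  have h1 : Partrec fun x : (ℕ × ℕ) × Cfg => phi (qcode x.1 x.2) (qinput x.1 x.2) :=
    phi_partrec.comp (qcode_primrec.to_comp.comp .fst .snd)
      (qinput_primrec.to_comp.comp .fst .snd)
  have h2 : Computable₂ fun (x : (ℕ × ℕ) × Cfg) (r : Bool × ℕ) => post x.2 r :=
    post_primrec.to_comp.comp (Computable.snd.comp .fst) .snd
  exact (h1.map h2).of_eq fun x => rfl

def simFP : (ℕ × ℕ × List ℕ) × Cfg →. (Bool × ℕ) ⊕ ((ℕ × ℕ × List ℕ) × Cfg) :=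
  fun y => (simF (y.1.1, y.1.2.1) y.2).map
    (Sum.casesOn · Sum.inl (fun c' => Sum.inr (y.1, c')))

theorem simFP_partrec : Partrec simFP := by
  have h1 : Partrec fun y : (ℕ × ℕ × List ℕ) × Cfg => simF (y.1.1, y.1.2.1) y.2 :=
    simF_partrec.comp
      (Computable.pair (Computable.fst.comp .fst)
        (Computable.fst.comp (Computable.snd.comp .fst))) .snd
  have h2 : Computable₂ fun (y : (ℕ × ℕ × List ℕ) × Cfg) (s : (Bool × ℕ) ⊕ Cfg) =>
      (Sum.casesOn s Sum.inl (fun c' => Sum.inr (y.1, c'))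
        : (Bool × ℕ) ⊕ ((ℕ × ℕ × List ℕ) × Cfg)) := by
    have := Primrec.sumCasesOn
      (f := fun y : ((ℕ × ℕ × List ℕ) × Cfg) × ((Bool × ℕ) ⊕ Cfg) => y.2)
      (g := fun _ v => (Sum.inl v : (Bool × ℕ) ⊕ ((ℕ × ℕ × List ℕ) × Cfg)))
      (h := fun y c' => (Sum.inr (y.1.1, c') : (Bool × ℕ) ⊕ ((ℕ × ℕ × List ℕ) × Cfg)))
      .snd (Primrec.sumInl.comp .snd).to₂
      ((Primrec.sumInr.comp (((Primrec.fst.comp .fst).comp .fst).pair .snd)).to₂)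
    exact this.to₂.to_comp.of_eq fun y => rfl
  exact (h1.map h2).of_eq fun y => rfl

def Psi : ℕ × ℕ × List ℕ →. Bool × ℕ :=
  fun x => PFun.fix simFP (x, ([], x.2.2.tail, none))

theorem Psi_partrec : Partrec Psi := by
  have h := simFP_partrec.fix
  exact h.comp (Computable.pair .id
    ((Computable.const []).pair
      ((Primrec.list_tail.to_comp.comp
        (Computable.snd.comp Computable.snd)).pair (Computable.const none))))

theorem mem_fixP_iff {x : ℕ × ℕ × List ℕ} {c : Cfg} {v : Bool × ℕ} :
    v ∈ PFun.fix simFP (x, c) ↔ v ∈ PFun.fix (simF (x.1, x.2.1)) c := by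
  constructor
  · intro h
    have : ∀ y : (ℕ × ℕ × List ℕ) × Cfg, v ∈ PFun.fix simFP y →
        v ∈ PFun.fix (simF (y.1.1, y.1.2.1)) y.2 := by
      intro y h
      refine PFun.fixInduction (C := fun y => v ∈ PFun.fix (simF (y.1.1, y.1.2.1)) y.2)
        h ?_
      intro y' h' ih
      rcases PFun.mem_fix_iff.1 h' with h'' | ⟨y'', hy', hv⟩
      · rcases (Part.mem_map_iff _).1 h'' with ⟨s, hs, hmap⟩
        cases s with
        | inl w => cases hmap; exact PFun.fix_stop hs
        | inr c'' => simp at hmap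
      · rcases (Part.mem_map_iff _).1 hy' with ⟨s, hs, hmap⟩
        cases s with
        | inl w => simp at hmap
        | inr c'' =>
          cases hmap
          exact PFun.mem_fix_iff.2 (Or.inr ⟨c'', hs, ih _ hy'⟩)
    exact this (x, c) h
  · intro h
    have : ∀ c : Cfg, v ∈ PFun.fix (simF (x.1, x.2.1)) c →
        v ∈ PFun.fix simFP (x, c) := by
      intro c h
      refine PFun.fixInduction (C := fun c => v ∈ PFun.fix simFP (x, c)) h ?_
      intro c' h' ih
      rcases PFun.mem_fix_iff.1 h' with h'' | ⟨c'', hc', hv⟩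
      · refine PFun.fix_stop ?_
        exact (Part.mem_map_iff _).2 ⟨Sum.inl v, h'', rfl⟩
      · refine PFun.mem_fix_iff.2 (Or.inr ⟨(x, c''), ?_, ih _ hc'⟩)
        exact (Part.mem_map_iff _).2 ⟨Sum.inr c'', hc', rfl⟩
    exact this c h

def psiCode : Code := Classical.choose (Nat.Partrec.Code.exists_code.1 Psi_partrec)

theorem psiCode_eval :
    psiCode.eval = fun n => Part.bind (Encodable.decode (α := ℕ × ℕ × List ℕ) n)
      fun a => (Psi a).map Encodable.encode :=
  Classical.choose_spec (Nat.Partrec.Code.exists_code.1 Psi_partrec)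

def bfun (d e : ℕ) : ℕ := Encodable.encode ((psiCode.curry d).curry e)

theorem bfun_primrec : Primrec₂ bfun :=
  Primrec.encode.comp₂ (primrec₂_curry.comp₂
    (primrec₂_curry.comp₂ (Primrec₂.const psiCode) Primrec₂.left) Primrec₂.right)

theorem phi_bfun (d e : ℕ) (l : List ℕ) :
    phi (bfun d e) l = PFun.fix (simF (d, e)) ([], l.tail, none) := by
  have h1 : Denumerable.ofNat Code (bfun d e) = (psiCode.curry d).curry e :=
    Denumerable.ofNat_encode _
  have henc : Nat.pair d (Nat.pair e (Encodable.encode l))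
      = Encodable.encode ((d, e, l) : ℕ × ℕ × List ℕ) := by
    simp [Encodable.encode_prod_val]
  rw [phi, h1, eval_curry, eval_curry, henc, psiCode_eval]
  apply Part.ext
  intro v
  constructor
  · intro hv
    rcases Part.mem_bind_iff.1 hv with ⟨k, hk, hdec⟩
    rcases Part.mem_bind_iff.1 hk with ⟨a, ha, hk'⟩
    have ha' := Part.mem_ofOption.1 ha
    rw [Encodable.encodek] at ha'
    cases (Option.mem_some_iff.1 ha')
    rcases (Part.mem_map_iff _).1 hk' with ⟨w, hw, rfl⟩
    rw [Part.mem_ofOption, Encodable.encodek] at hdec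
    cases (Option.mem_some_iff.1 hdec)
    exact mem_fixP_iff.1 hw
  · intro hv
    refine Part.mem_bind_iff.2 ⟨Encodable.encode v, ?_, ?_⟩
    · refine Part.mem_bind_iff.2 ⟨(d, e, l), ?_, ?_⟩
      · exact Part.mem_ofOption.2 (by rw [Encodable.encodek]; exact rfl)
      · exact (Part.mem_map_iff _).2 ⟨v, mem_fixP_iff.2 hv, rfl⟩
    · rw [Part.mem_ofOption, Encodable.encodek]
      exact Option.mem_some_iff.2 rfl



theorem take_concat' {l : List ℕ} {k : ℕ} (hk : k < l.length) :
    l.take k ++ [l[k]] = l.take (k + 1) := by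
  rw [List.take_succ, List.getElem?_eq_getElem hk]
  rfl

theorem valid_take {Φ : List ℕ →. Bool × ℕ} {h : ℕ →. ℕ} {n : ℕ} {as : List ℕ}
    (hv : ValidHist Φ h n as) (j : ℕ) : ValidHist Φ h n (as.take j) := by
  intro k hk
  have hkj : k < j := by simp [List.length_take] at hk; omega
  have hk' : k < as.length := by simp [List.length_take] at hk; omega
  obtain ⟨q, hq, hg⟩ := hv k hk'
  refine ⟨q, ?_, ?_⟩
  · rwa [List.take_take, min_eq_left (le_of_lt hkj)]
  · simpa using hg

theorem valid_agree {Φ : List ℕ →. Bool × ℕ} {h : ℕ →. ℕ} {n : ℕ} {as as' : List ℕ}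
    (h1 : ValidHist Φ h n as) (h2 : ValidHist Φ h n as')
    (hle : as.length ≤ as'.length) : as = as'.take as.length := by
  have key : ∀ k (hk : k < as.length), as[k] = as'[k]'(lt_of_lt_of_le hk hle) := by
    intro k
    induction k using Nat.strong_induction_on with
    | _ k ihk =>
      intro hk
      have hpre : as.take k = as'.take k := by
        apply List.ext_getElem
        · simp; omega
        · intro i h₁ h₂
          simp only [List.getElem_take]
          exact ihk i (by simp [List.length_take] at h₁; omega) (by simp [List.length_take] at h₁; omega)
      obtain ⟨q1, hq1, hg1⟩ := h1 k hk
      obtain ⟨q2, hq2, hg2⟩ := h2 k (lt_of_lt_of_le hk hle)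
      rw [← hpre] at hq2
      have hq : q1 = q2 := by
        have := Part.mem_unique hq1 hq2
        simpa using this
      subst hq
      exact Part.mem_unique hg1 hg2
  apply List.ext_getElem
  · simp [hle]
  · intro i h₁ h₂
    simp only [List.getElem_take]
    exact key i h₁

section Sim

variable {f g : ℕ →. ℕ} {d e : ℕ}

def Step (d e : ℕ) (c c' : Cfg) : Prop := Sum.inr c' ∈ simF (d, e) c

def Reach (d e : ℕ) : Cfg → Cfg → Prop := Relation.ReflTransGen (Step d e)

theorem mem_simF {p : ℕ × ℕ} {c : Cfg} {r : Bool × ℕ}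
    (hr : r ∈ phi (qcode p c) (qinput p c)) : post c r ∈ simF p c :=
  Part.mem_map _ hr

theorem simF_elim {p : ℕ × ℕ} {c : Cfg} {x : (Bool × ℕ) ⊕ Cfg} (h : x ∈ simF p c) :
    ∃ r, r ∈ phi (qcode p c) (qinput p c) ∧ post c r = x :=
  (Part.mem_map_iff _).1 h

theorem step_outer {bs rem : List ℕ} {q : ℕ} (h : (false, q) ∈ phi e (e :: bs)) :
    Step d e (bs, rem, none) (bs, rem, some (q, [])) :=
  mem_simF (p := (d, e)) (c := (bs, rem, none)) (r := (false, q)) h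

theorem step_innerTrue {bs rem cs : List ℕ} {q m : ℕ} (h : (true, m) ∈ phi d (q :: cs)) :
    Step d e (bs, rem, some (q, cs)) (bs ++ [m], rem, none) :=
  mem_simF (p := (d, e)) (c := (bs, rem, some (q, cs))) (r := (true, m)) h

theorem step_innerFalse {bs rem cs : List ℕ} {q q' a : ℕ} (h : (false, q') ∈ phi d (q :: cs)) :
    Step d e (bs, a :: rem, some (q, cs)) (bs, rem, some (q, cs ++ [a])) :=
  mem_simF (p := (d, e)) (c := (bs, a :: rem, some (q, cs))) (r := (false, q')) h

theorem out_true {bs rem : List ℕ} {m : ℕ} (h : (true, m) ∈ phi e (e :: bs)) :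
    Sum.inl ((true, m) : Bool × ℕ) ∈ simF (d, e) (bs, rem, none) :=
  mem_simF (p := (d, e)) (c := (bs, rem, none)) (r := (true, m)) h

theorem out_query {bs cs : List ℕ} {q q' : ℕ} (h : (false, q') ∈ phi d (q :: cs)) :
    Sum.inl ((false, q') : Bool × ℕ) ∈ simF (d, e) (bs, [], some (q, cs)) :=
  mem_simF (p := (d, e)) (c := (bs, [], some (q, cs))) (r := (false, q')) h

theorem fix_of_reach {c c' : Cfg} (h : Reach d e c c') {x : Bool × ℕ}
    (hx : x ∈ PFun.fix (simF (d, e)) c') : x ∈ PFun.fix (simF (d, e)) c := by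
  induction h generalizing x with
  | refl => exact hx
  | tail _ hstep ih => exact ih (PFun.mem_fix_iff.2 (Or.inr ⟨_, hstep, hx⟩))

theorem reach_fix_elim {c : Cfg} {x : Bool × ℕ} (h : x ∈ PFun.fix (simF (d, e)) c) :
    ∃ c', Reach d e c c' ∧ Sum.inl x ∈ simF (d, e) c' := by
  refine PFun.fixInduction
    (C := fun a => ∃ c', Reach d e a c' ∧ Sum.inl x ∈ simF (d, e) c') h ?_
  intro a ha ih
  rcases PFun.mem_fix_iff.1 ha with h' | ⟨a', ha', hx⟩
  · exact ⟨a, Relation.ReflTransGen.refl, h'⟩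
  · obtain ⟨c', hr, hl⟩ := ih a' ha'
    exact ⟨c', Relation.ReflTransGen.head ha' hr, hl⟩

theorem consume {q : ℕ} {cs : List ℕ} (hcs : ValidHist (phi d) g q cs)
    (bs rest : List ℕ) :
    ∀ j, j ≤ cs.length →
      Reach d e (bs, cs ++ rest, some (q, [])) (bs, cs.drop j ++ rest, some (q, cs.take j)) := by
  intro j hj
  induction j with
  | zero => simpa [Reach] using Relation.ReflTransGen.refl
  | succ j ih =>
    have hj' : j < cs.length := by omega
    obtain ⟨qj, hqj, _⟩ := hcs j hj'
    have hdrop : cs.drop j ++ rest = cs[j] :: (cs.drop (j + 1) ++ rest) := by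
      rw [List.drop_eq_getElem_cons hj']; rfl
    have hstep : Step d e (bs, cs.drop j ++ rest, some (q, cs.take j))
        (bs, cs.drop (j + 1) ++ rest, some (q, cs.take (j + 1))) := by
      rw [hdrop, ← take_concat' hj']
      exact step_innerFalse hqj
    exact Relation.ReflTransGen.tail (ih (by omega)) hstep

end Sim

section Main

variable {f g : ℕ →. ℕ} {d e : ℕ}

theorem forward (hfg : ∀ n m, m ∈ f n → HaltsTo (phi d) g n m) :
    ∀ bs, ValidHist (phi e) f e bs →
      ∃ as, ValidHist (phi (bfun d e)) g (bfun d e) as ∧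
        ∀ rest, Reach d e ([], as ++ rest, none) (bs, rest, none) := by
  intro bs
  induction bs using List.reverseRecOn with
  | nil =>
    intro _
    exact ⟨[], fun k hk => absurd hk (by simp), fun rest => Relation.ReflTransGen.refl⟩
  | append_singleton bs' m ih =>
    intro hv
    have hv' : ValidHist (phi e) f e bs' := by
      have := valid_take hv bs'.length
      rwa [List.take_left] at this
    obtain ⟨as', hvas', hreach⟩ := ih hv'
    obtain ⟨q, hq, hm⟩ := hv bs'.length (by simp)
    rw [List.take_left] at hq
    have hm' : m ∈ f q := by simpa using hm
    obtain ⟨cs, hcs, hhalt⟩ := hfg q m hm'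
    have hcons : ∀ rest, Reach d e ([], (as' ++ cs) ++ rest, none) (bs', rest, some (q, cs)) := by
      intro rest
      rw [List.append_assoc]
      refine Relation.ReflTransGen.trans (hreach (cs ++ rest)) ?_
      refine Relation.ReflTransGen.head (step_outer hq) ?_
      have r2 := consume (e := e) hcs bs' rest cs.length le_rfl
      rwa [List.drop_length, List.take_length, List.nil_append] at r2
    refine ⟨as' ++ cs, ?_, ?_⟩
    · intro k hk
      rcases lt_or_ge k as'.length with hlt | hge
      · obtain ⟨qk, hqk, hgk⟩ := hvas' k hlt
        refine ⟨qk, ?_, ?_⟩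
        · rw [List.take_append, show k - as'.length = 0 by omega,
            List.take_zero, List.append_nil]
          exact hqk
        · rwa [List.getElem_append_left hlt]
      · set j := k - as'.length with hj
        have hjcs : j < cs.length := by
          simp only [List.length_append] at hk; omega
        obtain ⟨qj, hqj, hgj⟩ := hcs j hjcs
        have htk : (as' ++ cs).take k = as' ++ cs.take j := by
          rw [List.take_append, List.take_of_length_le (by omega), hj]
        refine ⟨qj, ?_, ?_⟩
        · rw [phi_bfun]
          simp only [List.tail_cons]
          rw [htk]
          have r1 : Reach d e ([], as' ++ cs.take j, none) (bs', [], some (q, cs.take j)) := by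
            have h0 := hreach (cs.take j)
            refine Relation.ReflTransGen.trans h0 ?_
            refine Relation.ReflTransGen.head (step_outer hq) ?_
            have r2 := consume (e := e) (valid_take hcs j) bs' ([] : List ℕ) j
              (by simp [List.length_take]; omega)
            rw [List.append_nil, List.drop_of_length_le (by simp [List.length_take]),
              List.take_take, min_self] at r2
            simpa [Reach] using r2
          exact fix_of_reach r1 (PFun.fix_stop (out_query hqj))
        · have : (as' ++ cs)[k]'hk = cs[j]'hjcs := by
            rw [List.getElem_append_right hge]
          rwa [this]
    · intro rest
      exact Relation.ReflTransGen.tail (hcons rest) (step_innerTrue hhalt)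

theorem halt_notfalse {q m q' : ℕ} {cs : List ℕ} (h1 : (true, m) ∈ phi d (q :: cs))
    (h2 : (false, q') ∈ phi d (q :: cs)) : False := by
  have := Part.mem_unique h1 h2
  simp at this

theorem inner_le {q m : ℕ} {cs cs' : List ℕ} (h1 : ValidHist (phi d) g q cs)
    (h2 : ValidHist (phi d) g q cs') (hh : (true, m) ∈ phi d (q :: cs')) :
    cs.length ≤ cs'.length ∧ cs = cs'.take cs.length := by
  have hle : cs.length ≤ cs'.length := by
    by_contra hcon
    push_neg at hcon
    have heq := valid_agree h2 h1 (le_of_lt hcon)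
    obtain ⟨q0, hq0, _⟩ := h1 cs'.length hcon
    rw [← heq] at hq0
    exact halt_notfalse hh hq0
  exact ⟨hle, valid_agree h1 h2 hle⟩

theorem inner_halt_eq {q m m' : ℕ} {cs cs' : List ℕ} (h1 : ValidHist (phi d) g q cs)
    (hm : (true, m) ∈ phi d (q :: cs)) (h2 : ValidHist (phi d) g q cs')
    (hm' : (true, m') ∈ phi d (q :: cs')) : cs = cs' ∧ m = m' := by
  obtain ⟨hle1, hpre1⟩ := inner_le h1 h2 hm'
  obtain ⟨hle2, _⟩ := inner_le h2 h1 hm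
  have hlen : cs.length = cs'.length := le_antisymm hle1 hle2
  have hcs : cs = cs' := by rw [hpre1, hlen, List.take_length]
  subst hcs
  have := Part.mem_unique hm hm'
  simp at this
  exact ⟨rfl, this⟩

theorem inner_query_dom (hfg : ∀ n m, m ∈ f n → HaltsTo (phi d) g n m)
    {q q' : ℕ} {cs : List ℕ} (h1 : ValidHist (phi d) g q cs)
    (hq' : (false, q') ∈ phi d (q :: cs)) (hdom : q ∈ f.Dom) : q' ∈ g.Dom := by
  obtain ⟨ms, hms⟩ := (PFun.mem_dom f q).1 hdom
  obtain ⟨cst, hcst, hh⟩ := hfg q ms hms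
  obtain ⟨hle, hpre⟩ := inner_le h1 hcst hh
  have hlt : cs.length < cst.length := by
    rcases lt_or_eq_of_le hle with h | h
    · exact h
    · exfalso
      rw [hpre, h, List.take_length] at hq'
      exact halt_notfalse hh hq'
  obtain ⟨q'', hq'', hgq⟩ := hcst cs.length hlt
  rw [← hpre] at hq''
  have hqq : q'' = q' := by
    have := Part.mem_unique hq'' hq'
    simpa using this
  exact (PFun.mem_dom g q').2 ⟨_, hqq ▸ hgq⟩

theorem inner_halt_val (hfg : ∀ n m, m ∈ f n → HaltsTo (phi d) g n m)
    {q m : ℕ} {cs : List ℕ} (h1 : ValidHist (phi d) g q cs)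
    (hm : (true, m) ∈ phi d (q :: cs)) (hdom : q ∈ f.Dom) : m ∈ f q := by
  obtain ⟨ms, hms⟩ := (PFun.mem_dom f q).1 hdom
  obtain ⟨cst, hcst, hh⟩ := hfg q ms hms
  obtain ⟨_, hmeq⟩ := inner_halt_eq h1 hm hcst hh
  exact hmeq ▸ hms

end Main

section Inv

variable {f g : ℕ →. ℕ} {d e : ℕ}

theorem invariant (hfg : ∀ n m, m ∈ f n → HaltsTo (phi d) g n m)
    (hns : ¬ Stuck (phi e) f e) {as : List ℕ}
    (hVH : ValidHist (phi (bfun d e)) g (bfun d e) as) :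
    ∀ c : Cfg, Reach d e ([], as, none) c →
      ∃ k, k ≤ as.length ∧ c.2.1 = as.drop k ∧
        (∀ r, Reach d e ([], as.take k ++ r, none) (c.1, r, c.2.2)) ∧
        ValidHist (phi e) f e c.1 ∧
        (∀ q cs, c.2.2 = some (q, cs) →
          (false, q) ∈ phi e (e :: c.1) ∧ ValidHist (phi d) g q cs) := by
  intro c hr
  induction hr with
  | refl =>
    refine ⟨0, Nat.zero_le _, by simp, fun r => by simpa [Reach] using Relation.ReflTransGen.refl,
      fun k hk => absurd hk (by simp), fun q cs h => by simp at h⟩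
  | tail hmid hstep ih =>
    rename_i b c'
    obtain ⟨k, hk, hrem, hreach, hvbs, hinn⟩ := ih
    obtain ⟨bs, rem, inn⟩ := b
    obtain ⟨⟨b1, n⟩, hrphi, hpost⟩ := simF_elim hstep
    cases inn with
    | none =>
      cases b1
      · -- outer query
        have hc : c' = (bs, rem, some (n, [])) := by
          simp only [post, postOuter, cond_false] at hpost
          exact (Sum.inr.inj hpost.symm)
        subst hc
        refine ⟨k, hk, hrem, fun r => Relation.ReflTransGen.tail (hreach r) (step_outer hrphi),
          hvbs, ?_⟩
        intro q0 cs0 heq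
        obtain ⟨rfl, rfl⟩ : q0 = n ∧ cs0 = [] := by
          simp at heq
          exact ⟨heq.1.symm, heq.2⟩
        exact ⟨hrphi, fun k0 hk0 => absurd hk0 (by simp)⟩
      · simp only [post, postOuter, cond_true] at hpost
        exact absurd hpost (by simp)
    | some qc =>
      obtain ⟨q, cs⟩ := qc
      obtain ⟨hqmem, hcsv⟩ := hinn q cs rfl
      have hrphi' : ((b1, n) : Bool × ℕ) ∈ phi d (q :: cs) := hrphi
      cases b1
      · -- inner query
        cases rem with
        | nil =>
          simp only [post, postInner, cond_false, List.head?_nil] at hpost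
          exact absurd hpost (by simp)
        | cons a rem' =>
          have hc : c' = (bs, rem', some (q, cs ++ [a])) := by
            simp only [post, postInner, cond_false, List.head?_cons, List.tail_cons] at hpost
            exact (Sum.inr.inj hpost.symm)
          subst hc
          have hklt : k < as.length := by
            by_contra hcon
            push_neg at hcon
            rw [List.drop_of_length_le hcon] at hrem
            simp at hrem
          have hget : as[k] = a ∧ rem' = as.drop (k + 1) := by
            rw [List.drop_eq_getElem_cons hklt] at hrem
            have := List.cons.inj hrem
            exact ⟨this.1.symm, this.2⟩
          refine ⟨k + 1, hklt, hget.2, ?_, hvbs, ?_⟩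
          · intro r
            have h0 := hreach (as[k] :: r)
            have hstep' : Step d e (bs, as[k] :: r, some (q, cs))
                (bs, r, some (q, cs ++ [a])) := by
              rw [hget.1]
              exact step_innerFalse hrphi'
            have hres := Relation.ReflTransGen.tail h0 hstep'
            have hgoal : List.take (k + 1) as ++ r = List.take k as ++ as[k] :: r := by
              rw [← take_concat' hklt, List.append_assoc]
              rfl
            rw [hgoal]
            exact hres
          · intro q0 cs0 heq
            obtain ⟨rfl, rfl⟩ : q0 = q ∧ cs0 = cs ++ [a] := by
              simp at heq; exact ⟨heq.1.symm, heq.2.symm⟩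
            refine ⟨hqmem, ?_⟩
            intro k0 hk0
            simp only [List.length_append, List.length_cons, List.length_nil] at hk0
            rcases lt_or_ge k0 cs.length with hlt | hge
            · obtain ⟨qk, hqk, hgk⟩ := hcsv k0 hlt
              refine ⟨qk, ?_, ?_⟩
              · rwa [List.take_append, show k0 - cs.length = 0 by omega,
                  List.take_zero, List.append_nil]
              · rwa [List.getElem_append_left hlt]
            · have hk0' : k0 = cs.length := by omega
              subst hk0'
              obtain ⟨q', hq', hga⟩ := hVH k hklt
              rw [phi_bfun] at hq'
              simp only [List.tail_cons] at hq'
              have hfix : ((false, n) : Bool × ℕ) ∈ PFun.fix (simF (d, e)) ([], as.take k, none) := by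
                have h0 := hreach []
                rw [List.append_nil] at h0
                exact fix_of_reach h0 (PFun.fix_stop (out_query hrphi'))
              have hq'n : q' = n := by
                have := Part.mem_unique hq' hfix
                simpa using this
              refine ⟨n, ?_, ?_⟩
              · rw [List.take_left]
                exact hrphi'
              · have : (cs ++ [a])[cs.length]'(by simp) = a := by simp
                rw [this, ← hget.1, ← hq'n]
                exact hga
      · -- inner halt
        have hc : c' = (bs ++ [n], rem, none) := by
          simp only [post, postInner, cond_true] at hpost
          exact (Sum.inr.inj hpost.symm)
        subst hc
        have hqdom : q ∈ f.Dom := by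
          by_contra hnd
          exact hns ⟨bs, q, hvbs, hqmem, hnd⟩
        have hnf : n ∈ f q := inner_halt_val hfg hcsv hrphi' hqdom
        refine ⟨k, hk, hrem,
          fun r => Relation.ReflTransGen.tail (hreach r) (step_innerTrue hrphi'),
          ?_, fun q0 cs0 h => by simp at h⟩
        intro k0 hk0
        simp only [List.length_append, List.length_cons, List.length_nil] at hk0
        rcases lt_or_ge k0 bs.length with hlt | hge
        · obtain ⟨qk, hqk, hgk⟩ := hvbs k0 hlt
          refine ⟨qk, ?_, ?_⟩
          · rwa [List.take_append, show k0 - bs.length = 0 by omega,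
              List.take_zero, List.append_nil]
          · rwa [List.getElem_append_left hlt]
        · have hk0' : k0 = bs.length := by omega
          subst hk0'
          refine ⟨q, ?_, ?_⟩
          · rw [List.take_left]
            exact hqmem
          · have : (bs ++ [n])[bs.length]'(by simp) = n := by simp
            rw [this]
            exact hnf

end Inv

section Final

variable {f g : ℕ →. ℕ} {d e : ℕ}

theorem notStuck_B (hfg : ∀ n m, m ∈ f n → HaltsTo (phi d) g n m)
    (hns : ¬ Stuck (phi e) f e) : ¬ Stuck (phi (bfun d e)) g (bfun d e) := by
  rintro ⟨as, q', hvas, hq', hqd⟩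
  rw [phi_bfun] at hq'
  simp only [List.tail_cons] at hq'
  obtain ⟨c', hr, hl⟩ := reach_fix_elim hq'
  obtain ⟨k, hk, hrem, hreach, hvbs, hinn⟩ := invariant hfg hns hvas c' hr
  obtain ⟨bs, rem, inn⟩ := c'
  obtain ⟨⟨b1, n⟩, hrphi, hpost⟩ := simF_elim hl
  cases inn with
  | none =>
    cases b1
    · simp only [post, postOuter, cond_false] at hpost
      exact absurd hpost (by simp)
    · simp only [post, postOuter, cond_true] at hpost
      have := Sum.inl.inj hpost
      simp at this
  | some qc =>
    obtain ⟨q, cs⟩ := qc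
    obtain ⟨hqmem, hcsv⟩ := hinn q cs rfl
    have hrphi' : ((b1, n) : Bool × ℕ) ∈ phi d (q :: cs) := hrphi
    cases b1
    · cases rem with
      | cons a rem' =>
        simp only [post, postInner, cond_false, List.head?_cons] at hpost
        exact absurd hpost (by simp)
      | nil =>
        simp only [post, postInner, cond_false, List.head?_nil] at hpost
        have hqn : n = q' := by
          have := Sum.inl.inj hpost
          simpa using this
        have hqdom : q ∈ f.Dom := by
          by_contra hnd
          exact hns ⟨bs, q, hvbs, hqmem, hnd⟩
        exact hqd (hqn ▸ inner_query_dom hfg hcsv hrphi' hqdom)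
    · simp only [post, postInner, cond_true] at hpost
      exact absurd hpost (by simp)

theorem halts_iff (hfg : ∀ n m, m ∈ f n → HaltsTo (phi d) g n m)
    (hns : ¬ Stuck (phi e) f e) :
    (∃ m, HaltsTo (phi e) f e m) ↔ (∃ m, HaltsTo (phi (bfun d e)) g (bfun d e) m) := by
  constructor
  · rintro ⟨m, bs, hbs, hm⟩
    obtain ⟨as, hvas, hreach⟩ := forward hfg bs hbs
    refine ⟨m, as, hvas, ?_⟩
    rw [phi_bfun]
    simp only [List.tail_cons]
    have h0 := hreach []
    rw [List.append_nil] at h0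
    exact fix_of_reach h0 (PFun.fix_stop (out_true hm))
  · rintro ⟨m, as, hvas, hm⟩
    rw [phi_bfun] at hm
    simp only [List.tail_cons] at hm
    obtain ⟨c', hr, hl⟩ := reach_fix_elim hm
    obtain ⟨k, hk, hrem, hreach, hvbs, hinn⟩ := invariant hfg hns hvas c' hr
    obtain ⟨bs, rem, inn⟩ := c'
    obtain ⟨⟨b1, n⟩, hrphi, hpost⟩ := simF_elim hl
    cases inn with
    | none =>
      cases b1
      · simp only [post, postOuter, cond_false] at hpost
        exact absurd hpost (by simp)
      · simp only [post, postOuter, cond_true] at hpost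
        have hnm : n = m := by
          have := Sum.inl.inj hpost
          simpa using this
        exact ⟨m, bs, hvbs, hnm ▸ hrphi⟩
    | some qc =>
      obtain ⟨q, cs⟩ := qc
      cases b1
      · cases rem with
        | cons a rem' =>
          simp only [post, postInner, cond_false, List.head?_cons] at hpost
          exact absurd hpost (by simp)
        | nil =>
          simp only [post, postInner, cond_false, List.head?_nil] at hpost
          have := Sum.inl.inj hpost
          simp at this
      · simp only [post, postInner, cond_true] at hpost
        exact absurd hpost (by simp)

end Final

def tphi (d : ℕ) : List ℕ → Bool × ℕ
  | [] => (false, 0)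
  | [n] => (false, bfun d n)
  | _ :: a :: _ => (true, a)

theorem tphi_computable (d : ℕ) : Computable (tphi d) := by
  have hinner : Primrec₂ fun (_ : List ℕ) (p : ℕ × List ℕ) =>
      (List.casesOn p.2 ((false, bfun d p.1) : Bool × ℕ)
        (fun a _ => ((true, a) : Bool × ℕ)) : Bool × ℕ) := by
    have := Primrec.list_casesOn
      (f := fun y : List ℕ × (ℕ × List ℕ) => y.2.2)
      (g := fun y => ((false, bfun d y.2.1) : Bool × ℕ))
      (h := fun _ p => ((true, p.1) : Bool × ℕ))
      (Primrec.snd.comp .snd)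
      ((Primrec.const false).pair
        (bfun_primrec.comp (Primrec.const d) (Primrec.fst.comp .snd)))
      (((Primrec.const true).pair (Primrec.fst.comp .snd)).to₂)
    exact this.to₂
  have h := Primrec.list_casesOn (f := fun l : List ℕ => l)
    (g := fun _ => ((false, 0) : Bool × ℕ))
    (h := fun _ p => (List.casesOn p.2 ((false, bfun d p.1) : Bool × ℕ)
      (fun a _ => ((true, a) : Bool × ℕ)) : Bool × ℕ))
    Primrec.id (Primrec.const _) hinner
  refine h.to_comp.of_eq fun l => ?_
  rcases l with _ | ⟨n, _ | ⟨a, t⟩⟩ <;> rfl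

end KJAux

theorem KJump_uniformly_monotone :
    ∃ b : ℕ → ℕ → ℕ, Computable₂ b ∧
      ∀ (f g : ℕ →. ℕ) (d : ℕ),
        (∀ n m, m ∈ f n → HaltsTo (phi d) g n m) →
        (∀ e m, m ∈ KJump f e → m ∈ KJump g (b d e)) ∧
        SubTuringLE (KJump f) (KJump g) := by
  refine ⟨KJAux.bfun, KJAux.bfun_primrec.to_comp, ?_⟩
  intro f g d hfg
  have main : ∀ e m, m ∈ KJump f e → m ∈ KJump g (KJAux.bfun d e) := by
    intro e m hm
    obtain ⟨hns, hval⟩ := hm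
    refine ⟨KJAux.notStuck_B hfg hns, ?_⟩
    rw [← hval]
    exact if_congr (Iff.symm (KJAux.halts_iff hfg hns)) rfl rfl
  refine ⟨main, ?_⟩
  refine ⟨fun l => Part.some (KJAux.tphi d l), (KJAux.tphi_computable d), ?_⟩
  intro n m hm
  refine ⟨[m], ?_, ?_⟩
  · intro k hk
    have hk0 : k = 0 := by
      simp only [List.length_cons, List.length_nil] at hk
      omega
    subst hk0
    refine ⟨KJAux.bfun d n, ?_, ?_⟩
    · exact Part.mem_some _
    · simpa using main n m hm
  · exact Part.mem_some _
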